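/- arXiv:math/0211345 — 6 statements merged into one kernel-verified Lean document; each statement's English description precedes it below -/
import Mathlib

section
/- Let Q be a unital quantale with unit e, S a complete lattice, and r : Q → Q(S) a pre-unital representation, i.e., x ≤ r(e)(x) for all x ∈ S. Then r is irreducible (for every x ∈ S, r(⊤_Q)(x) ≤ x implies x = ⊥_S or x = ⊤_S) if and only if r is strong (r(⊤_Q)(x) = ⊤_S for every x ≠ ⊥_S). -/
/-- For a unital quantale `Q` with unit `e` and a pre-unital representation
`r` of `Q` on a complete lattice `S` (i.e. `x ≤ r e x` for all `x`), the representation is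
irreducible (`r ⊤ x ≤ x` implies `x = ⊥` or `x = ⊤`) iff it is strong
(`r ⊤ x = ⊤` for every `x ≠ ⊥`). -/
theorem preunital_representation_irreducible_iff_strong
    {Q S : Type*} [CompleteLattice Q] [CompleteLattice S]
    (mul : Q → Q → Q) (e : Q)
    (hassoc : ∀ a b c : Q, mul (mul a b) c = mul a (mul b c))
    (hdistl : ∀ (a : Q) (s : Set Q), mul a (sSup s) = ⨆ b ∈ s, mul a b)
    (hdistr : ∀ (s : Set Q) (b : Q), mul (sSup s) b = ⨆ a ∈ s, mul a b)
    (hel : ∀ a : Q, mul e a = a) (her : ∀ a : Q, mul a e = a)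
    (r : Q → S → S)
    (hrS : ∀ (a : Q) (s : Set S), r a (sSup s) = ⨆ x ∈ s, r a x)
    (hrQ : ∀ (s : Set Q) (x : S), r (sSup s) x = ⨆ a ∈ s, r a x)
    (hrmul : ∀ (a b : Q) (x : S), r (mul a b) x = r b (r a x))
    (hpreunital : ∀ x : S, x ≤ r e x) :
    (∀ x : S, r ⊤ x ≤ x → x = ⊥ ∨ x = ⊤) ↔ (∀ x : S, x ≠ ⊥ → r ⊤ x = ⊤) := by
  have hmonoQ : ∀ (a b : Q) (x : S), a ≤ b → r a x ≤ r b x := by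
    intro a b x hab
    have h : sSup {a, b} = b := by
      rw [sSup_pair, sup_eq_right.mpr hab]
    calc r a x ≤ ⨆ c ∈ ({a, b} : Set Q), r c x := by
          exact le_iSup₂_of_le a (by simp) le_rfl
      _ = r (sSup {a, b}) x := (hrQ _ _).symm
      _ = r b x := by rw [h]
  constructor
  · intro hirr x hx
    have hle : r ⊤ (r ⊤ x) ≤ r ⊤ x := by
      rw [← hrmul]
      exact hmonoQ _ _ _ le_top
    rcases hirr _ hle with h | h
    · exfalso
      apply hx
      have hx' : x ≤ r ⊤ x := le_trans (hpreunital x) (hmonoQ _ _ _ le_top)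
      rw [h] at hx'
      exact le_bot_iff.mp hx'
    · exact h
  · intro hstr x hle
    by_cases hx : x = ⊥
    · exact Or.inl hx
    · right
      have := hstr x hx
      rw [this] at hle
      exact top_le_iff.mp hle
end

section
/- Let Q be a quantale. Then Q is spatial with respect to irreducible representations (i.e., for all a, b ∈ Q, a = b whenever p(a) = p(b) for every complete lattice S and every irreducible representation p : Q → Q(S)) if and only if every element a ∈ Q is a meet of prime elements, i.e., a = ⨅{p ∈ Q : p is prime and a ≤ p}. -/
universe u

namespace KrumlAux

theorem helper_mono {α : Type*} {β : Type*} [CompleteLattice α] [CompleteLattice β]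
    (f : α → β) (hf : ∀ s : Set α, f (sSup s) = ⨆ x ∈ s, f x) : Monotone f := by
  intro a b hab
  have h : f (sSup {a, b}) = f a ⊔ f b := by rw [hf]; rw [iSup_insert, iSup_singleton]
  rw [sSup_pair, sup_eq_right.2 hab] at h
  exact le_sup_left.trans h.ge

theorem helper_bot {α : Type*} {β : Type*} [CompleteLattice α] [CompleteLattice β]
    (f : α → β) (hf : ∀ s : Set α, f (sSup s) = ⨆ x ∈ s, f x) : f ⊥ = ⊥ := by
  rw [← sSup_empty, hf]; simp

variable {Q : Type u} [CompleteLattice Q] (mul : Q → Q → Q) (q : Q)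

def pairF (m : Q × Prop) (d : Q) : Q := mul m.1 d ⊔ ⨆ _ : m.2, d

def actF (m : Q × Prop) (c : Q) : Q × Prop := (pairF mul m c, False)

def setF (m : Q × Prop) : Set (Q × Prop) :=
  {m' | (∀ d, pairF mul m d ≤ q → pairF mul m' d ≤ q) ∧ (m.1 ≤ q → m'.1 ≤ q)}

def jF (m : Q × Prop) : Q × Prop := sSup (setF mul q m)

theorem mem_setF_self (m : Q × Prop) : m ∈ setF mul q m := ⟨fun _ h => h, id⟩

theorem le_jF (m : Q × Prop) : m ≤ jF mul q m := le_sSup (mem_setF_self mul q m)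

variable (hdistl : ∀ (a : Q) (s : Set Q), mul a (sSup s) = ⨆ b ∈ s, mul a b)
variable (hdistr : ∀ (s : Set Q) (b : Q), mul (sSup s) b = ⨆ a ∈ s, mul a b)
variable (hassoc : ∀ a b c : Q, mul (mul a b) c = mul a (mul b c))

section
include hdistr

theorem mul_mono_left {a b : Q} (h : a ≤ b) (c : Q) : mul a c ≤ mul b c :=
  helper_mono (fun x => mul x c) (fun s => hdistr s c) h

theorem mul_bot_left (c : Q) : mul ⊥ c = ⊥ :=
  helper_bot (fun x => mul x c) (fun s => hdistr s c)

theorem pairF_mono_left {m m' : Q × Prop} (h : m ≤ m') (d : Q) :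
    pairF mul m d ≤ pairF mul m' d := by
  refine sup_le_sup (mul_mono_left mul hdistr h.1 d) ?_
  exact iSup_le fun h2 => le_iSup (fun _ : m'.2 => d) (h.2 h2)

theorem pairF_sSup_left (B : Set (Q × Prop)) (d : Q) :
    pairF mul (sSup B) d = ⨆ m ∈ B, pairF mul m d := by
  apply le_antisymm
  · apply sup_le
    · rw [Prod.fst_sSup, hdistr]
      apply iSup₂_le
      rintro x ⟨m, hm, rfl⟩
      exact le_iSup₂_of_le m hm le_sup_left
    · apply iSup_le
      intro h2
      have h2' : ∃ p ∈ Prod.snd '' B, p := by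
        rw [← sSup_Prop_eq]; exact h2
      obtain ⟨p, ⟨m, hm, rfl⟩, hp⟩ := h2'
      exact le_iSup₂_of_le m hm ((le_iSup (fun _ : m.2 => d) hp).trans le_sup_right)
  · exact iSup₂_le fun m hm => pairF_mono_left mul hdistr (le_sSup hm) d

end

section
include hdistl

theorem mul_mono_right (a : Q) {b b' : Q} (h : b ≤ b') : mul a b ≤ mul a b' :=
  helper_mono (fun x => mul a x) (fun s => hdistl a s) h

theorem pairF_mono_right (m : Q × Prop) {c c' : Q} (h : c ≤ c') :
    pairF mul m c ≤ pairF mul m c' :=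
  sup_le_sup (mul_mono_right mul hdistl m.1 h) (iSup_mono fun _ => h)

theorem pairF_sSup_right (m : Q × Prop) (s : Set Q) :
    pairF mul m (sSup s) = ⨆ c ∈ s, pairF mul m c := by
  apply le_antisymm
  · apply sup_le
    · rw [hdistl]
      exact iSup₂_le fun c hc => le_iSup₂_of_le c hc le_sup_left
    · apply iSup_le
      intro h2
      apply sSup_le
      intro c hc
      exact le_iSup₂_of_le c hc ((le_iSup (fun _ : m.2 => c) h2).trans le_sup_right)
  · exact iSup₂_le fun c hc => pairF_mono_right mul hdistl m (le_sSup hc)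

end

section
include hdistl hdistr hassoc

theorem pairF_act (m : Q × Prop) (c d : Q) :
    pairF mul (actF mul m c) d = pairF mul m (mul c d) := by
  show mul (pairF mul m c) d ⊔ ⨆ _ : False, d = _
  have h1 : (⨆ _ : False, d) = ⊥ := by simp
  have h2 : mul (mul m.1 c ⊔ ⨆ _ : m.2, c) d
      = mul (mul m.1 c) d ⊔ mul (⨆ _ : m.2, c) d := by
    rw [← sSup_pair, hdistr, iSup_insert, iSup_singleton]
  have h3 : mul (⨆ _ : m.2, c) d = ⨆ _ : m.2, mul c d := by
    by_cases hm : m.2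
    · rw [iSup_pos hm, iSup_pos hm]
    · simp only [iSup_neg hm]
      exact mul_bot_left mul hdistr d
  rw [h1, sup_bot_eq]
  show mul (mul m.1 c ⊔ ⨆ _ : m.2, c) d = _
  rw [h2, h3, hassoc]
  rfl

theorem actF_act (m : Q × Prop) (c d : Q) :
    actF mul (actF mul m c) d = actF mul m (mul c d) := by
  have := pairF_act mul hdistl hdistr hassoc m c d
  unfold actF
  unfold actF at this
  rw [this]

end


section
include hdistr

theorem jF_mem (m : Q × Prop) : jF mul q m ∈ setF mul q m := by
  constructor
  · intro d hd
    rw [jF, pairF_sSup_left mul hdistr]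
    exact iSup₂_le fun m' hm' => hm'.1 d hd
  · intro h
    rw [jF, Prod.fst_sSup]
    apply sSup_le
    rintro _ ⟨m', hm', rfl⟩
    exact hm'.2 h

theorem setF_mono {m m₂ : Q × Prop} (h : m ≤ m₂) : setF mul q m ⊆ setF mul q m₂ := by
  intro m' hm'
  exact ⟨fun d hd => hm'.1 d (le_trans (pairF_mono_left mul hdistr h d) hd),
    fun h2 => hm'.2 (le_trans h.1 h2)⟩

theorem jF_mono {m m₂ : Q × Prop} (h : m ≤ m₂) : jF mul q m ≤ jF mul q m₂ :=
  sSup_le_sSup (setF_mono mul q hdistr h)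

theorem jF_idem (m : Q × Prop) : jF mul q (jF mul q m) = jF mul q m := by
  apply le_antisymm
  · apply sSup_le
    intro m' hm'
    apply le_sSup
    exact ⟨fun d hd => hm'.1 d ((jF_mem mul q hdistr m).1 d hd),
      fun h => hm'.2 ((jF_mem mul q hdistr m).2 h)⟩
  · exact le_jF mul q (jF mul q m)

theorem actF_mono_left {m m' : Q × Prop} (h : m ≤ m') (c : Q) :
    actF mul m c ≤ actF mul m' c :=
  ⟨pairF_mono_left mul hdistr h c, le_refl _⟩

end

include hdistl in
theorem actF_mono_right (m : Q × Prop) {c c' : Q} (h : c ≤ c') :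
    actF mul m c ≤ actF mul m c' :=
  ⟨pairF_mono_right mul hdistl m h, le_refl _⟩

section
include hdistl hdistr hassoc

theorem actF_mem {m m' : Q × Prop} (hm' : m' ∈ setF mul q m) (c : Q) :
    actF mul m' c ∈ setF mul q (actF mul m c) := by
  constructor
  · intro d hd
    rw [pairF_act mul hdistl hdistr hassoc] at hd ⊢
    exact hm'.1 _ hd
  · intro h
    exact hm'.1 c h

theorem actF_jF_le (m : Q × Prop) (c : Q) :
    actF mul (jF mul q m) c ≤ jF mul q (actF mul m c) := by
  constructor
  · show pairF mul (sSup (setF mul q m)) c ≤ _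
    rw [pairF_sSup_left mul hdistr]
    apply iSup₂_le
    intro m' hm'
    have h1 : actF mul m' c ≤ jF mul q (actF mul m c) :=
      le_sSup (actF_mem mul q hdistl hdistr hassoc hm' c)
    exact h1.1
  · exact fun h => h.elim

theorem jF_act_jF (m : Q × Prop) (c : Q) :
    jF mul q (actF mul (jF mul q m) c) = jF mul q (actF mul m c) := by
  apply le_antisymm
  · calc jF mul q (actF mul (jF mul q m) c)
        ≤ jF mul q (jF mul q (actF mul m c)) :=
          jF_mono mul q hdistr (actF_jF_le mul q hdistl hdistr hassoc m c)
      _ = jF mul q (actF mul m c) := jF_idem mul q hdistr _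
  · exact jF_mono mul q hdistr (actF_mono_left mul hdistr (le_jF mul q m) c)

end


theorem aux_rep
    (hassoc : ∀ a b c : Q, mul (mul a b) c = mul a (mul b c))
    (hdistl : ∀ (a : Q) (s : Set Q), mul a (sSup s) = ⨆ b ∈ s, mul a b)
    (hdistr : ∀ (s : Set Q) (b : Q), mul (sSup s) b = ⨆ a ∈ s, mul a b)
    (hq : ∀ c d : Q, mul c (mul ⊤ d) ≤ q → c ≤ q ∨ d ≤ q) :
    ∃ (S : Type u) (_inst : CompleteLattice S) (p : Q → S → S),
      (∀ (c : Q) (s : Set S), p c (sSup s) = ⨆ x ∈ s, p c x) ∧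
      (∀ (s : Set Q) (x : S), p (sSup s) x = ⨆ c ∈ s, p c x) ∧
      (∀ (c d : Q) (x : S), p (mul c d) x = p d (p c x)) ∧
      (∀ x : S, p ⊤ x ≤ x → x = ⊥ ∨ x = ⊤) ∧
      (∀ a b : Q, p a = p b → b ≤ q → a ≤ q) := by
  classical
  set S := {m : Q × Prop // jF mul q m = m} with hS
  have hinf : ∀ A : Set S, jF mul q (sInf (Subtype.val '' A)) = sInf (Subtype.val '' A) := by
    intro A
    apply le_antisymm
    · apply le_sInf
      rintro _ ⟨x, hx, rfl⟩
      calc jF mul q (sInf (Subtype.val '' A)) ≤ jF mul q x.val :=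
            jF_mono mul q hdistr (sInf_le ⟨x, hx, rfl⟩)
        _ = x.val := x.2
    · exact le_jF mul q _
  letI instInf : InfSet S := ⟨fun A => ⟨sInf (Subtype.val '' A), hinf A⟩⟩
  letI instS : CompleteLattice S := completeLatticeOfInf S (by
    intro A
    constructor
    · intro x hx
      exact Subtype.coe_le_coe.mp (sInf_le (Set.mem_image_of_mem _ hx))
    · intro y hy
      apply Subtype.coe_le_coe.mp
      apply le_sInf
      rintro _ ⟨x, hx, rfl⟩
      exact Subtype.coe_le_coe.mpr (hy hx))
  have hsSup_val : ∀ A : Set S,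
      (sSup A).val = jF mul q (sSup (Subtype.val '' A)) := by
    intro A
    have hlub : IsLUB A (⟨jF mul q (sSup (Subtype.val '' A)), jF_idem mul q hdistr _⟩ : S) := by
      constructor
      · intro x hx
        exact Subtype.coe_le_coe.mp
          (le_trans (le_sSup (Set.mem_image_of_mem _ hx)) (le_jF mul q _))
      · intro y hy
        apply Subtype.coe_le_coe.mp
        have h1 : sSup (Subtype.val '' A) ≤ y.val := by
          apply sSup_le
          rintro _ ⟨x, hx, rfl⟩
          exact Subtype.coe_le_coe.mpr (hy hx)
        calc jF mul q (sSup (Subtype.val '' A)) ≤ jF mul q y.val := jF_mono mul q hdistr h1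
          _ = y.val := y.2
    rw [hlub.sSup_eq]
  set r : Q → S → S := fun c x => ⟨jF mul q (actF mul x.val c), jF_idem mul q hdistr _⟩ with hr
  have hrval : ∀ (c : Q) (x : S), (r c x).val = jF mul q (actF mul x.val c) := fun _ _ => rfl
  refine ⟨S, instS, r, ?_, ?_, ?_, ?_, ?_⟩
  · -- cond 1
    intro c A
    apply le_antisymm
    · apply Subtype.coe_le_coe.mp
      rw [hrval, hsSup_val A, jF_act_jF mul q hdistl hdistr hassoc]
      have hW : jF mul q ((⨆ x ∈ A, r c x).val) = (⨆ x ∈ A, r c x).val := (⨆ x ∈ A, r c x).2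
      have hle : actF mul (sSup (Subtype.val '' A)) c ≤ (⨆ x ∈ A, r c x).val := by
        constructor
        · show pairF mul (sSup (Subtype.val '' A)) c ≤ _
          rw [pairF_sSup_left mul hdistr]
          apply iSup₂_le
          rintro _ ⟨x, hx, rfl⟩
          have h2 : (r c x).val ≤ (⨆ x ∈ A, r c x).val :=
            Subtype.coe_le_coe.mpr (le_biSup _ hx)
          rw [hrval] at h2
          have h1 : actF mul x.val c ≤ (⨆ x ∈ A, r c x).val :=
            le_trans (le_jF mul q _) h2
          exact h1.1
        · exact fun h => h.elim
      calc jF mul q (actF mul (sSup (Subtype.val '' A)) c)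
          ≤ jF mul q ((⨆ x ∈ A, r c x).val) := jF_mono mul q hdistr hle
        _ = _ := hW
    · apply iSup₂_le
      intro x hx
      apply Subtype.coe_le_coe.mp
      rw [hrval, hrval]
      exact jF_mono mul q hdistr
        (actF_mono_left mul hdistr (Subtype.coe_le_coe.mpr (le_sSup hx)) c)
  · -- cond 2
    intro s x
    apply le_antisymm
    · apply Subtype.coe_le_coe.mp
      rw [hrval]
      have hW : jF mul q ((⨆ c ∈ s, r c x).val) = (⨆ c ∈ s, r c x).val := (⨆ c ∈ s, r c x).2
      have hle : actF mul x.val (sSup s) ≤ (⨆ c ∈ s, r c x).val := by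
        constructor
        · show pairF mul x.val (sSup s) ≤ _
          rw [pairF_sSup_right mul hdistl]
          apply iSup₂_le
          intro c hc
          have h2 : (r c x).val ≤ (⨆ c ∈ s, r c x).val :=
            Subtype.coe_le_coe.mpr (le_biSup (fun c => r c x) hc)
          rw [hrval] at h2
          have h1 : actF mul x.val c ≤ (⨆ c ∈ s, r c x).val :=
            le_trans (le_jF mul q _) h2
          exact h1.1
        · exact fun h => h.elim
      calc jF mul q (actF mul x.val (sSup s))
          ≤ jF mul q ((⨆ c ∈ s, r c x).val) := jF_mono mul q hdistr hle
        _ = _ := hW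
    · apply iSup₂_le
      intro c hc
      apply Subtype.coe_le_coe.mp
      rw [hrval, hrval]
      exact jF_mono mul q hdistr (actF_mono_right mul hdistl x.val (le_sSup hc))
  · -- cond 3
    intro c d x
    apply Subtype.ext
    rw [hrval, hrval, hrval, jF_act_jF mul q hdistl hdistr hassoc,
      actF_act mul hdistl hdistr hassoc]
  · -- cond 4: irreducibility
    intro x hx
    have hbotval : (⊥ : S).val = jF mul q (⊥ : Q × Prop) := by
      have h1 : (⟨jF mul q (⊥ : Q × Prop), jF_idem mul q hdistr _⟩ : S) = ⊥ := by
        apply le_antisymm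
        · apply Subtype.coe_le_coe.mp
          calc jF mul q (⊥ : Q × Prop) ≤ jF mul q ((⊥ : S).val) := jF_mono mul q hdistr bot_le
            _ = (⊥ : S).val := (⊥ : S).2
        · exact bot_le
      rw [← h1]
    have htopfix : jF mul q (⊤ : Q × Prop) = ⊤ := le_antisymm le_top (le_jF mul q _)
    have htopval : (⊤ : S).val = (⊤ : Q × Prop) := by
      have h1 : (⟨(⊤ : Q × Prop), htopfix⟩ : S) = ⊤ :=
        le_antisymm le_top (Subtype.coe_le_coe.mp le_top)
      rw [← h1]
    have hact : actF mul x.val ⊤ ≤ x.val :=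
      le_trans (le_jF mul q _) (Subtype.coe_le_coe.mpr hx)
    have h1 : pairF mul x.val ⊤ ≤ x.val.1 := hact.1
    by_cases hep : x.val.2
    · right
      have htopz : (⊤ : Q) ≤ x.val.1 :=
        le_trans (le_trans (le_iSup (fun _ : x.val.2 => (⊤ : Q)) hep) le_sup_right) h1
      apply Subtype.ext
      rw [htopval]
      exact Prod.ext (le_antisymm le_top htopz) (eq_top_iff.mpr (fun _ => hep))
    · have hz : mul x.val.1 ⊤ ≤ x.val.1 := le_trans le_sup_left h1
      by_cases hzq : x.val.1 ≤ q
      · left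
        have hmem : x.val ∈ setF mul q (⊥ : Q × Prop) := by
          constructor
          · intro d _
            apply sup_le
            · exact le_trans (le_trans (mul_mono_right mul hdistl x.val.1 le_top) hz) hzq
            · exact iSup_le fun h => (hep h).elim
          · intro _; exact hzq
        have hle2 : x.val ≤ (⊥ : S).val := by
          rw [hbotval]; exact le_sSup hmem
        exact le_antisymm (Subtype.coe_le_coe.mp hle2) bot_le
      · right
        have hmem : (⊤ : Q × Prop) ∈ setF mul q x.val := by
          constructor
          · intro d hd
            have hpd : mul x.val.1 d ≤ q := le_trans le_sup_left hd
            have h2 : mul x.val.1 (mul ⊤ d) ≤ q := by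
              rw [← hassoc]
              exact le_trans (mul_mono_left mul hdistr hz d) hpd
            have hdq : d ≤ q := (hq _ _ h2).resolve_left hzq
            have h3 : mul x.val.1 (mul ⊤ (mul ⊤ d)) ≤ q := by
              have e1 : mul ⊤ (mul ⊤ d) ≤ mul ⊤ d := by
                rw [← hassoc]
                exact mul_mono_left mul hdistr le_top d
              exact le_trans (mul_mono_right mul hdistl x.val.1 e1) h2
            have htd : mul ⊤ d ≤ q := (hq _ _ h3).resolve_left hzq
            show pairF mul (⊤ : Q × Prop) d ≤ q
            exact sup_le htd (iSup_le fun _ => hdq)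
          · intro h; exact absurd h hzq
        have h4 : (⊤ : Q × Prop) ≤ x.val :=
          le_trans (le_sSup hmem) (le_of_eq x.2)
        apply Subtype.ext
        rw [htopval]
        exact le_antisymm le_top h4
  · -- separation
    intro a b hpab hbq
    set x0 : S := ⟨jF mul q ((⊥ : Q), True), jF_idem mul q hdistr _⟩ with hx0
    have h := congrFun hpab x0
    have hval : jF mul q (actF mul (jF mul q ((⊥ : Q), True)) a)
        = jF mul q (actF mul (jF mul q ((⊥ : Q), True)) b) := congrArg Subtype.val h
    rw [jF_act_jF mul q hdistl hdistr hassoc, jF_act_jF mul q hdistl hdistr hassoc] at hval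
    have hsimp : ∀ c : Q, actF mul ((⊥ : Q), True) c = ((c : Q), False) := by
      intro c
      unfold actF pairF
      refine Prod.ext ?_ rfl
      show mul ⊥ c ⊔ ⨆ _ : True, c = c
      rw [mul_bot_left mul hdistr, iSup_pos trivial, bot_sup_eq]
    rw [hsimp a, hsimp b] at hval
    have hle : ((a : Q), False) ≤ jF mul q ((b : Q), False) := hval ▸ le_jF mul q _
    have hfst : (jF mul q ((b : Q), False)).1 ≤ q := by
      rw [jF, Prod.fst_sSup]
      apply sSup_le
      rintro _ ⟨m', hm', rfl⟩
      exact hm'.2 hbq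
    exact le_trans hle.1 hfst

end KrumlAux

/-- Kruml: A quantale `Q` is spatial with respect to irreducible
representations (irreducible representations on complete lattices separate the elements
of `Q`) if and only if every element of `Q` is the meet of the prime elements above it. -/
theorem quantale_spatial_iff_every_element_meet_of_primes
    {Q : Type u} [CompleteLattice Q]
    (mul : Q → Q → Q)
    (hassoc : ∀ a b c : Q, mul (mul a b) c = mul a (mul b c))
    (hdistl : ∀ (a : Q) (s : Set Q), mul a (sSup s) = ⨆ b ∈ s, mul a b)
    (hdistr : ∀ (s : Set Q) (b : Q), mul (sSup s) b = ⨆ a ∈ s, mul a b) :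
    (∀ a b : Q,
        (∀ (S : Type u) [CompleteLattice S] (p : Q → S → S),
          (∀ (c : Q) (s : Set S), p c (sSup s) = ⨆ x ∈ s, p c x) →
          (∀ (s : Set Q) (x : S), p (sSup s) x = ⨆ c ∈ s, p c x) →
          (∀ (c d : Q) (x : S), p (mul c d) x = p d (p c x)) →
          (∀ x : S, p ⊤ x ≤ x → x = ⊥ ∨ x = ⊤) →
          p a = p b) →
        a = b) ↔
      (∀ a : Q,
        a = sInf {p : Q | (∀ c d : Q, mul c (mul ⊤ d) ≤ p → c ≤ p ∨ d ≤ p) ∧ a ≤ p}) := by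
  constructor
  · -- spatial → meet of primes
    intro hsep a
    apply hsep
    intro S _ p h1 h2 h3 h4
    funext x
    have hmono_c : ∀ x : S, Monotone (fun c => p c x) :=
      fun x => KrumlAux.helper_mono (fun c => p c x) (fun s => h2 s x)
    have hmono_x : ∀ c : Q, Monotone (p c) :=
      fun c => KrumlAux.helper_mono (p c) (fun s => h1 c s)
    apply le_antisymm
    · exact hmono_c x (le_sInf fun r hr => hr.2)
    · -- pointwise prime
      set pp := sSup {d : Q | p d x ≤ p a x} with hpp
      have hppx : p pp x ≤ p a x := by
        rw [hpp, h2]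
        exact iSup₂_le fun d hd => hd
      have happ : a ≤ pp := le_sSup (le_refl _)
      have hprime : ∀ u v : Q, mul u (mul ⊤ v) ≤ pp → u ≤ pp ∨ v ≤ pp := by
        intro u v huv
        have hkey : p v (p ⊤ (p u x)) ≤ p a x := by
          have h0 : p (mul u (mul ⊤ v)) x ≤ p a x := le_trans (hmono_c x huv) hppx
          rwa [h3, h3] at h0
        have hs : p ⊤ (p ⊤ (p u x)) ≤ p ⊤ (p u x) := by
          rw [← h3]
          exact hmono_c (p u x) le_top
        rcases h4 _ hs with hbot | htop
        · have ht : p ⊤ (p u x) ≤ p u x := by rw [hbot]; exact bot_le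
          rcases h4 _ ht with h5 | h5
          · left
            apply le_sSup
            show p u x ≤ p a x
            rw [h5]; exact bot_le
          · left
            apply le_sSup
            show p u x ≤ p a x
            have hch : p u x ≤ p ⊤ (p u x) := by
              calc p u x ≤ p ⊤ x := hmono_c x le_top
                _ ≤ p ⊤ (p u x) := hmono_x ⊤ (by rw [h5]; exact le_top)
            rw [hbot] at hch
            exact le_trans hch bot_le
        · right
          apply le_sSup
          show p v x ≤ p a x
          calc p v x ≤ p v (p ⊤ (p u x)) := hmono_x v (by rw [htop]; exact le_top)
            _ ≤ p a x := hkey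
      have hm : sInf {p : Q | (∀ c d : Q, mul c (mul ⊤ d) ≤ p → c ≤ p ∨ d ≤ p) ∧ a ≤ p} ≤ pp :=
        sInf_le ⟨hprime, happ⟩
      exact le_trans (hmono_c x hm) hppx
  · -- meet of primes → spatial
    intro hmeet a b hab
    have key : ∀ a' b' : Q,
        (∀ (S : Type u) [CompleteLattice S] (p : Q → S → S),
          (∀ (c : Q) (s : Set S), p c (sSup s) = ⨆ x ∈ s, p c x) →
          (∀ (s : Set Q) (x : S), p (sSup s) x = ⨆ c ∈ s, p c x) →
          (∀ (c d : Q) (x : S), p (mul c d) x = p d (p c x)) →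
          (∀ x : S, p ⊤ x ≤ x → x = ⊥ ∨ x = ⊤) →
          p a' = p b') →
        ∀ q : Q, (∀ c d : Q, mul c (mul ⊤ d) ≤ q → c ≤ q ∨ d ≤ q) → b' ≤ q → a' ≤ q := by
      intro a' b' hab' q hq hbq
      obtain ⟨S, instS, p, h1, h2, h3, h4, h5⟩ :=
        KrumlAux.aux_rep mul q hassoc hdistl hdistr hq
      exact h5 a' b' (hab' S p h1 h2 h3 h4) hbq
    have hsets : {p : Q | (∀ c d : Q, mul c (mul ⊤ d) ≤ p → c ≤ p ∨ d ≤ p) ∧ a ≤ p}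
        = {p : Q | (∀ c d : Q, mul c (mul ⊤ d) ≤ p → c ≤ p ∨ d ≤ p) ∧ b ≤ p} := by
      ext q
      simp only [Set.mem_setOf_eq]
      constructor
      · rintro ⟨hqp, haq⟩
        refine ⟨hqp, ?_⟩
        exact key b a (fun S _ p c1 c2 c3 c4 => (hab S p c1 c2 c3 c4).symm) q hqp haq
      · rintro ⟨hqp, hbq⟩
        exact ⟨hqp, key a b hab q hqp hbq⟩
    calc a = sInf {p : Q | (∀ c d : Q, mul c (mul ⊤ d) ≤ p → c ≤ p ∨ d ≤ p) ∧ a ≤ p} :=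
        hmeet a
      _ = sInf {p : Q | (∀ c d : Q, mul c (mul ⊤ d) ≤ p → c ≤ p ∨ d ≤ p) ∧ b ≤ p} := by
        rw [hsets]
      _ = b := (hmeet b).symm
end

section
/- Let A be a commutative unital C*-algebra and let a, b ∈ Max A. Then p(a) = p(b) for every complete lattice S and every irreducible representation p : Max A → Q(S) if and only if ⊤∘a∘⊤ = ⊤∘b∘⊤ in Max A (where ⊤ = A is the top of Max A, so ⊤∘a∘⊤ is the closure of the linear span of AaA, the least closed two-sided ideal of A containing a). In other words, the spatialization of Max A with respect to all irreducible representations is the locale of closed two-sided ideals of A, with quotient map a ↦ ⊤∘a∘⊤. -/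
set_option linter.unusedSectionVars false


universe u

variable (A : Type u) [NormedCommRing A] [StarRing A] [CStarRing A] [CompleteSpace A]
  [NormedAlgebra ℂ A] [StarModule ℂ A]

/-- The elements of `Max A`: the closed linear subspaces of the C*-algebra `A`. -/
abbrev MaxOf := {M : Submodule ℂ A // IsClosed (M : Set A)}

variable {A}

noncomputable instance : InfSet (MaxOf A) :=
  ⟨fun s =>
    ⟨sInf ((fun M : MaxOf A => M.1) '' s), by
      rw [Submodule.coe_sInf]
      exact isClosed_biInter fun M hM => by
        obtain ⟨N, _, rfl⟩ := hM
        exact N.2⟩⟩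

/-- `Max A` is a complete lattice (meets are intersections; joins are the closures of the
sums of subspaces). -/
noncomputable instance : CompleteLattice (MaxOf A) :=
  completeLatticeOfInf _ fun s =>
    ⟨fun M hM => Subtype.coe_le_coe.mp (sInf_le ⟨M, hM, rfl⟩),
     fun N hN => Subtype.coe_le_coe.mp (le_sInf fun P hP => by
        obtain ⟨M, hM, rfl⟩ := hP
        exact hN hM)⟩

/-- The quantale multiplication of `Max A`: `M∘N` is the closure of the linear span of the
products. -/
noncomputable def qmul (M N : MaxOf A) : MaxOf A :=
  ⟨(M.1 * N.1).topologicalClosure, Submodule.isClosed_topologicalClosure _⟩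

/- ----------------------------------------------------------------
   Auxiliary development
---------------------------------------------------------------- -/

open WeakDual

noncomputable instance MaxSpatialAux.commCStarAlgebra : CommCStarAlgebra A :=
  { ‹NormedCommRing A›, ‹StarRing A›, ‹CStarRing A›, ‹CompleteSpace A›,
    ‹NormedAlgebra ℂ A›, ‹StarModule ℂ A› with }

namespace MaxSpatialAux

lemma coe_le {M N : MaxOf A} : M ≤ N ↔ M.1 ≤ N.1 := Subtype.coe_le_coe.symm

lemma top_coe : ((⊤ : MaxOf A).1 : Submodule ℂ A) = ⊤ := by
  have h : (⟨⊤, by rw [Submodule.top_coe]; exact isClosed_univ⟩ : MaxOf A) ≤ ⊤ := le_top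
  exact le_antisymm le_top (coe_le.mp h)

lemma mem_top' (x : A) : x ∈ (⊤ : MaxOf A).1 := by rw [top_coe]; trivial

lemma bot_coe : ((⊥ : MaxOf A).1 : Submodule ℂ A) = ⊥ := by
  have h : (⊥ : MaxOf A) ≤ ⟨⊥, by
      rw [Submodule.bot_coe]; exact isClosed_singleton⟩ := bot_le
  exact le_antisymm (coe_le.mp h) bot_le

lemma maxOf_subsingleton (h : Subsingleton A) : Subsingleton (MaxOf A) :=
  ⟨fun M N => Subtype.ext (by
    ext x
    have hx : x = 0 := Subsingleton.elim _ _
    subst hx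
    exact iff_of_true (zero_mem _) (zero_mem _))⟩

/-- The line through an element. -/
noncomputable def lineM (u : A) : MaxOf A :=
  ⟨Submodule.span ℂ {u}, by
    haveI : FiniteDimensional ℂ (Submodule.span ℂ ({u} : Set A)) :=
      FiniteDimensional.span_of_finite ℂ (Set.finite_singleton u)
    exact Submodule.closed_of_finiteDimensional _⟩

lemma mem_lineM_self (u : A) : u ∈ (lineM u).1 := Submodule.mem_span_singleton_self u

/-- The unit of the quantale `Max A`. -/
noncomputable def eU : MaxOf A := lineM (1 : A)

lemma qmul_le {M N C : MaxOf A} (h : ∀ m ∈ M.1, ∀ n ∈ N.1, m * n ∈ C.1) :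
    qmul M N ≤ C :=
  coe_le.mpr (Submodule.topologicalClosure_minimal _ (Submodule.mul_le.mpr h) C.2)

lemma mul_mem_qmul {M N : MaxOf A} {f g : A} (hf : f ∈ M.1) (hg : g ∈ N.1) :
    f * g ∈ (qmul M N).1 :=
  (M.1 * N.1).le_topologicalClosure (Submodule.mul_mem_mul hf hg)

lemma qmul_top_top : qmul (⊤ : MaxOf A) ⊤ = ⊤ := by
  refine le_antisymm le_top (coe_le.mpr ?_)
  intro f _
  simpa using mul_mem_qmul (mem_top' f) (mem_top' 1)

lemma qmul_e_right (c : MaxOf A) : qmul c eU = c := by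
  refine le_antisymm (qmul_le ?_) (coe_le.mpr ?_)
  · intro m hm n hn
    obtain ⟨α, rfl⟩ := Submodule.mem_span_singleton.mp hn
    have : m * (α • (1 : A)) = α • m := by
      rw [mul_smul_comm, mul_one]
    rw [this]
    exact Submodule.smul_mem _ _ hm
  · intro f hf
    simpa [eU] using mul_mem_qmul hf (mem_lineM_self 1)

lemma qmul_e_left (c : MaxOf A) : qmul eU c = c := by
  refine le_antisymm (qmul_le ?_) (coe_le.mpr ?_)
  · intro m hm n hn
    obtain ⟨α, rfl⟩ := Submodule.mem_span_singleton.mp hm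
    have : (α • (1 : A)) * n = α • n := by
      rw [smul_mul_assoc, one_mul]
    rw [this]
    exact Submodule.smul_mem _ _ hn
  · intro f hf
    simpa [eU] using mul_mem_qmul (mem_lineM_self 1) hf

/-- Right-absorbing subspaces (two-sided closed ideals, by commutativity). -/
def IsIdealE (j : MaxOf A) : Prop := ∀ f ∈ j.1, ∀ g : A, f * g ∈ j.1

lemma qmul_ideal_left {j : MaxOf A} (hj : IsIdealE j) (c : MaxOf A) : qmul j c ≤ j :=
  qmul_le fun m hm n _ => hj m hm n

lemma qmul_ideal_right {j : MaxOf A} (hj : IsIdealE j) (c : MaxOf A) : qmul c j ≤ j :=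
  qmul_le fun m _ n hn => by rw [mul_comm]; exact hj n hn m

lemma le_T (a : MaxOf A) : a ≤ qmul (qmul ⊤ a) ⊤ := by
  refine coe_le.mpr fun f hf => ?_
  have h1 : f ∈ (qmul ⊤ a).1 := by
    simpa using mul_mem_qmul (mem_top' 1) hf
  simpa using mul_mem_qmul h1 (mem_top' 1)

lemma T_isIdeal (a : MaxOf A) : IsIdealE (qmul (qmul ⊤ a) ⊤) := by
  intro f hf g
  have hcont : Continuous fun x : A => x * g := continuous_mul_right g
  set P : Submodule ℂ A := (qmul ⊤ a).1 * (⊤ : MaxOf A).1 with hP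
  have hmaps : Set.MapsTo (fun x : A => x * g) (P : Set A) (P : Set A) := by
    intro x hx
    refine Submodule.mul_induction_on hx (fun m hm n _ => ?_) (fun x y hx hy => ?_)
    · show m * n * g ∈ P
      rw [mul_assoc]
      exact Submodule.mul_mem_mul hm (mem_top' _)
    · show (x + y) * g ∈ P
      rw [add_mul]
      exact Submodule.add_mem _ hx hy
  have hf' : f ∈ closure (P : Set A) := hf
  have hres := map_mem_closure hcont hf' hmaps
  exact hres

lemma T_min {a j : MaxOf A} (haj : a ≤ j) (hj : IsIdealE j) :
    qmul (qmul ⊤ a) ⊤ ≤ j := by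
  have h1 : qmul ⊤ a ≤ j := qmul_le fun m _ n hn => by
    rw [mul_comm]; exact hj n (coe_le.mp haj hn) m
  exact qmul_le fun m hm n _ => hj m (coe_le.mp h1 hm) n

/- ---------------- characters ---------------- -/

/-- The kernel of a character, as an element of `Max A`. -/
noncomputable def kerM (χ : characterSpace ℂ A) : MaxOf A :=
  ⟨{ carrier := {f : A | χ f = 0}
     add_mem' := by
       intro a b ha hb
       simp only [Set.mem_setOf_eq] at *
       rw [map_add, ha, hb, add_zero]
     zero_mem' := by simp only [Set.mem_setOf_eq, map_zero]
     smul_mem' := by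
       intro c x hx
       simp only [Set.mem_setOf_eq] at *
       rw [map_smul, hx, smul_zero] },
   by
     have : {f : A | χ f = 0} = χ ⁻¹' {0} := rfl
     exact isClosed_singleton.preimage (map_continuous χ)⟩

lemma mem_kerM {χ : characterSpace ℂ A} {f : A} : f ∈ (kerM χ).1 ↔ χ f = 0 := Iff.rfl

lemma kerM_isIdeal (χ : characterSpace ℂ A) : IsIdealE (kerM χ) := by
  intro f hf g
  rw [mem_kerM, map_mul, mem_kerM.mp hf, zero_mul]

lemma top_eq_ker_sup (χ : characterSpace ℂ A) :
    sSup ({kerM χ, eU} : Set (MaxOf A)) = ⊤ := by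
  refine le_antisymm le_top (coe_le.mpr ?_)
  have h1 : (kerM χ).1 ≤ (sSup ({kerM χ, eU} : Set (MaxOf A))).1 :=
    coe_le.mp (le_sSup (by simp))
  have h2 : (eU : MaxOf A).1 ≤ (sSup ({kerM χ, eU} : Set (MaxOf A))).1 :=
    coe_le.mp (le_sSup (by simp))
  intro f _
  have hf : f = (f - χ f • 1) + χ f • 1 := by abel
  rw [hf]
  refine Submodule.add_mem _ (h1 ?_) (h2 (Submodule.smul_mem _ _ (mem_lineM_self 1)))
  rw [mem_kerM, map_sub, map_smul, map_one, smul_eq_mul, mul_one, sub_self]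

/-- An absorbing closed subspace as a ring ideal. -/
def toIdeal (j : MaxOf A) (hj : IsIdealE j) : Ideal A where
  carrier := j.1
  add_mem' := fun ha hb => j.1.add_mem ha hb
  zero_mem' := j.1.zero_mem
  smul_mem' := fun c x hx => by
    have := hj x hx c
    simpa [smul_eq_mul, mul_comm] using this

lemma exists_char_of_one_not_mem {j : MaxOf A} (hj : IsIdealE j) (h1 : (1 : A) ∉ j.1) :
    ∃ χ : characterSpace ℂ A, ∀ f ∈ j.1, χ f = 0 := by
  have hne : toIdeal j hj ≠ ⊤ := by
    rw [Ideal.ne_top_iff_one]; exact h1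
  obtain ⟨M, hM, hjM⟩ := (toIdeal j hj).exists_le_maximal hne
  haveI := hM
  exact ⟨M.toCharacterSpace, fun f hf =>
    M.toCharacterSpace_apply_eq_zero_of_mem (hjM hf)⟩

lemma qmul_le_ker_iff (χ : characterSpace ℂ A) {c d : MaxOf A} :
    qmul c d ≤ kerM χ ↔ (c ≤ kerM χ ∨ d ≤ kerM χ) := by
  constructor
  · intro h
    by_contra hcd
    push_neg at hcd
    obtain ⟨h1, h2⟩ := hcd
    obtain ⟨f, hfc, hf⟩ := SetLike.not_le_iff_exists.mp (fun hh => h1 (coe_le.mpr hh))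
    obtain ⟨g, hgd, hg⟩ := SetLike.not_le_iff_exists.mp (fun hh => h2 (coe_le.mpr hh))
    have hmem : f * g ∈ (kerM χ).1 := coe_le.mp h (mul_mem_qmul hfc hgd)
    rw [mem_kerM, map_mul] at hmem
    rcases mul_eq_zero.mp hmem with h | h
    · exact hf h
    · exact hg h
  · rintro (h | h) <;> refine qmul_le fun m hm n hn => ?_
    · rw [mem_kerM, map_mul, mem_kerM.mp (coe_le.mp h hm), zero_mul]
    · rw [mem_kerM, map_mul, mem_kerM.mp (coe_le.mp h hn), mul_zero]

/- ---------------- Gelfand transform helpers ---------------- -/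

lemma exists_elem (g : C(characterSpace ℂ A, ℝ)) :
    ∃ u : A, ∀ t : characterSpace ℂ A, t u = (g t : ℂ) := by
  obtain ⟨u, hu⟩ := (gelfandTransform_bijective A).surjective
    ⟨fun t => (g t : ℂ), Complex.continuous_ofReal.comp g.continuous⟩
  exact ⟨u, fun t => congrFun (congrArg DFunLike.coe hu) t⟩

lemma norm_le_of_char {x : A} {c : ℝ} (hc : 0 ≤ c)
    (h : ∀ t : characterSpace ℂ A, ‖t x‖ ≤ c) : ‖x‖ ≤ c := by
  have hiso := gelfandTransform_isometry A
  have h0 : ‖x‖ = ‖gelfandTransform ℂ A x‖ :=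
    (hiso.norm_map_of_map_zero (map_zero _) x).symm
  rw [h0]
  exact (ContinuousMap.norm_le _ hc).mpr fun t => h t

lemma eq_zero_of_char {x : A} (h : ∀ t : characterSpace ℂ A, t x = 0) : x = 0 := by
  have hiso := gelfandTransform_isometry A
  have hx : gelfandTransform ℂ A x = 0 := by
    ext t; exact h t
  exact hiso.injective (by rw [hx, map_zero])

/-- Functions vanishing on a set of characters. -/
noncomputable def KU (U : Set (characterSpace ℂ A)) : MaxOf A :=
  ⟨{ carrier := {f : A | ∀ t ∈ U, t f = 0}
     add_mem' := by
       intro a b ha hb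
       intro t ht
       rw [map_add, ha t ht, hb t ht, add_zero]
     zero_mem' := fun t _ => map_zero t
     smul_mem' := by
       intro c x hx t ht
       rw [map_smul, hx t ht, smul_zero] },
   by
     show IsClosed {f : A | ∀ t ∈ U, t f = 0}
     have heq : {f : A | ∀ t ∈ U, t f = 0} =
         ⋂ t ∈ U, ((fun f : A => (t : characterSpace ℂ A) f) ⁻¹' {0}) := by
       ext f; simp
     rw [heq]
     exact isClosed_biInter fun t _ => isClosed_singleton.preimage (map_continuous t)⟩

lemma mem_KU {U : Set (characterSpace ℂ A)} {f : A} :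
    f ∈ (KU U).1 ↔ ∀ t ∈ U, t f = 0 := Iff.rfl

lemma KU_isIdeal (U : Set (characterSpace ℂ A)) : IsIdealE (KU U) := by
  intro f hf g t ht
  rw [map_mul, hf t ht, zero_mul]

/-- Approximation: the kernel of a character is the closed join of the ideals of
functions vanishing on neighborhoods of the character. -/
lemma ker_le_fam (χ₀ : characterSpace ℂ A) :
    kerM χ₀ ≤ sSup {c : MaxOf A |
      ∃ U : Set (characterSpace ℂ A), IsOpen U ∧ χ₀ ∈ U ∧ c = KU U} := by
  set fam : Set (MaxOf A) :=
    {c | ∃ U : Set (characterSpace ℂ A), IsOpen U ∧ χ₀ ∈ U ∧ c = KU U} with hfam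
  refine coe_le.mpr fun f hf => ?_
  have hcl : IsClosed ((sSup fam).1 : Set A) := (sSup fam).2
  suffices h : f ∈ closure ((sSup fam).1 : Set A) by rwa [hcl.closure_eq] at h
  rw [Metric.mem_closure_iff]
  intro ε hε
  have evc : Continuous fun t : characterSpace ℂ A => ‖t f‖ :=
    ((WeakDual.eval_continuous f).comp continuous_subtype_val).norm
  set Cs : Set (characterSpace ℂ A) := {t | ‖t f‖ ≤ ε/4} with hCs
  set D : Set (characterSpace ℂ A) := {t | ε/2 ≤ ‖t f‖} with hD
  have hCsc : IsClosed Cs := isClosed_le evc continuous_const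
  have hDc : IsClosed D := isClosed_le continuous_const evc
  have hdisj : Disjoint Cs D := by
    rw [Set.disjoint_left]
    intro t htC htD
    have h1 : ‖t f‖ ≤ ε/4 := htC
    have h2 : ε/2 ≤ ‖t f‖ := htD
    linarith
  obtain ⟨g, hg0, hg1, hg01⟩ := exists_continuous_zero_one_of_isClosed hCsc hDc hdisj
  obtain ⟨u, hu⟩ := exists_elem g
  set U₁ : Set (characterSpace ℂ A) := {t | ‖t f‖ < ε/4} with hU₁
  have hU₁o : IsOpen U₁ := isOpen_lt evc continuous_const
  have hχU₁ : χ₀ ∈ U₁ := by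
    show ‖χ₀ f‖ < ε/4
    rw [mem_kerM.mp hf, norm_zero]
    linarith
  have hbK : f * u ∈ (KU U₁).1 := by
    intro t ht
    have htC : t ∈ Cs := by
      show ‖t f‖ ≤ ε/4
      exact le_of_lt ht
    rw [map_mul, hu t, hg0 htC]
    simp
  have hKle : KU U₁ ≤ sSup fam := le_sSup ⟨U₁, hU₁o, hχU₁, rfl⟩
  refine ⟨f * u, coe_le.mp hKle hbK, ?_⟩
  rw [dist_eq_norm]
  have hb : ‖f - f * u‖ ≤ ε/2 := by
    refine norm_le_of_char (by linarith) fun t => ?_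
    have hcalc : t (f - f * u) = t f * (1 - t u) := by
      rw [map_sub, map_mul]; ring
    rw [hcalc, norm_mul]
    by_cases htD : t ∈ D
    · rw [hu t, hg1 htD]
      simp
      linarith
    · have h1 : ‖t f‖ < ε/2 := not_le.mp htD
      have h2 : ‖1 - t u‖ ≤ 1 := by
        rw [hu t]
        have : (1 : ℂ) - (g t : ℂ) = ((1 - g t : ℝ) : ℂ) := by push_cast; ring
        rw [this, Complex.norm_real, Real.norm_eq_abs]
        have hgt := hg01 t
        rw [Set.mem_Icc] at hgt
        rw [abs_le]
        constructor <;> linarith [hgt.1, hgt.2]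
      calc ‖t f‖ * ‖1 - t u‖ ≤ (ε/2) * 1 :=
            mul_le_mul h1.le h2 (norm_nonneg _) (by linarith)
        _ = ε/2 := mul_one _
  linarith

/-- Closed ideals are intersections of character kernels. -/
lemma exists_char_not_mem [Nontrivial A] {j : MaxOf A} (hj : IsIdealE j) {f : A}
    (hf : f ∉ j.1) :
    ∃ χ : characterSpace ℂ A, (∀ g ∈ j.1, χ g = 0) ∧ χ f ≠ 0 := by
  set X := characterSpace ℂ A
  set e : A ≃+* C(X, ℂ) := RingEquiv.ofBijective
    ((gelfandTransform ℂ A).toRingHom) (gelfandTransform_bijective A) with he'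
  have he : ∀ x : A, ∀ t : X, (e x) t = t x := fun x t => rfl
  have hiso : Isometry (⇑e) := gelfandTransform_isometry A
  set J : Ideal C(X, ℂ) := Ideal.comap (e.symm : C(X, ℂ) →+* A) (toIdeal j hj) with hJ
  have hmemJ : ∀ g : C(X, ℂ), g ∈ J ↔ e.symm g ∈ j.1 := fun g => Ideal.mem_comap
  have hisym : Isometry (⇑e.symm) := by
    apply Isometry.of_dist_eq
    intro g₁ g₂
    rw [← hiso.dist_eq (e.symm g₁) (e.symm g₂), e.apply_symm_apply, e.apply_symm_apply]
  have hclosed : IsClosed (J : Set C(X, ℂ)) := by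
    have : (J : Set C(X, ℂ)) = (⇑e.symm) ⁻¹' (j.1 : Set A) := by
      ext g; exact hmemJ g
    rw [this]
    exact j.2.preimage hisym.continuous
  have hkey := ContinuousMap.idealOfSet_ofIdeal_eq_closure J
  rw [Ideal.closure_eq_of_isClosed J hclosed] at hkey
  have hfJ : e f ∉ J := by
    rw [hmemJ]
    simpa using hf
  rw [← hkey] at hfJ
  obtain ⟨x, hx, hfx⟩ := ContinuousMap.notMem_idealOfSet.mp hfJ
  refine ⟨x, fun g hg => ?_, by rwa [he] at hfx⟩
  have hgx : (e g) x = 0 := by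
    refine ContinuousMap.notMem_setOfIdeal.mp hx ?_
    rw [hmemJ]
    simpa using hg
  rwa [he] at hgx

/- ---------------- representations ---------------- -/

structure QRep (A : Type u) [NormedCommRing A] [StarRing A] [CStarRing A] [CompleteSpace A]
    [NormedAlgebra ℂ A] [StarModule ℂ A] (S : Type u) [CompleteLattice S] where
  p : MaxOf A → S → S
  hsup1 : ∀ (c : MaxOf A) (s : Set S), p c (sSup s) = ⨆ x ∈ s, p c x
  hsup2 : ∀ (s : Set (MaxOf A)) (x : S), p (sSup s) x = ⨆ c ∈ s, p c x
  hmul : ∀ (c d : MaxOf A) (x : S), p (qmul c d) x = p d (p c x)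
  hirr : ∀ x : S, p ⊤ x ≤ x → x = ⊥ ∨ x = ⊤

namespace QRep

variable {S : Type u} [CompleteLattice S] (r : QRep A S)

lemma pbot1 (c : MaxOf A) : r.p c ⊥ = ⊥ := by
  have := r.hsup1 c ∅
  simpa using this

lemma pbot2 (x : S) : r.p ⊥ x = ⊥ := by
  have := r.hsup2 ∅ x
  simpa using this

lemma psup1 (c : MaxOf A) (x y : S) : r.p c (x ⊔ y) = r.p c x ⊔ r.p c y := by
  have := r.hsup1 c {x, y}
  rwa [sSup_pair, iSup_pair] at this

lemma psup2 (c d : MaxOf A) (x : S) : r.p (c ⊔ d) x = r.p c x ⊔ r.p d x := by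
  have := r.hsup2 {c, d} x
  rwa [sSup_pair, iSup_pair] at this

lemma monoc {c d : MaxOf A} (h : c ≤ d) (x : S) : r.p c x ≤ r.p d x := by
  have h2 := r.psup2 c d x
  rw [sup_eq_right.mpr h] at h2
  rw [h2]
  exact le_sup_left

lemma monox (c : MaxOf A) {x y : S} (h : x ≤ y) : r.p c x ≤ r.p c y := by
  have h2 := r.psup1 c x y
  rw [sup_eq_right.mpr h] at h2
  rw [h2]
  exact le_sup_left

lemma ptop_dichot (x : S) : r.p ⊤ x = ⊥ ∨ r.p ⊤ x = ⊤ := by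
  refine r.hirr _ (le_of_eq ?_)
  rw [← r.hmul ⊤ ⊤ x, qmul_top_top]

lemma ptop_of_ne (hnd : r.p ⊤ ⊤ = ⊤) {x : S} (hx : x ≠ ⊥) : r.p ⊤ x = ⊤ := by
  rcases r.ptop_dichot x with h | h
  · -- then x ⊔ p ⊤ x = x is invariant, hence x = ⊤
    have hw : r.p ⊤ (x ⊔ r.p ⊤ x) ≤ x ⊔ r.p ⊤ x := by
      rw [r.psup1]
      have h2 : r.p ⊤ (r.p ⊤ x) = r.p ⊤ x := by
        rw [← r.hmul ⊤ ⊤ x, qmul_top_top]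
      rw [h2, sup_idem]
      exact le_sup_right
    rcases r.hirr _ hw with h3 | h3
    · exact absurd (le_bot_iff.mp (le_sup_left.trans h3.le)) hx
    · rw [h] at h3
      rw [sup_bot_eq] at h3
      rw [h3]
      exact hnd
  · exact h

/-- Two-valuedness on ideal elements. -/
lemma ideal_dichotomy [Nontrivial A] (hnd : r.p ⊤ ⊤ = ⊤) {j : MaxOf A}
    (hj : IsIdealE j) (z : S) : r.p j z = ⊥ ∨ r.p j z = ⊤ := by
  by_cases hw : r.p j z = ⊥
  · exact Or.inl hw
  right
  obtain ⟨χ⟩ := (inferInstance : Nonempty (characterSpace ℂ A))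
  set w := r.p j z with hwdef
  have h1 : r.p ⊤ w = ⊤ := r.ptop_of_ne hnd hw
  have he : r.p eU w = w := by
    rw [hwdef, ← r.hmul j eU z, qmul_e_right]
  have hk : r.p (kerM χ) w ≤ w := by
    rw [hwdef, ← r.hmul j (kerM χ) z]
    exact r.monoc (qmul_ideal_left hj _) z
  have hsplit : r.p ⊤ w = r.p (kerM χ) w ⊔ r.p eU w := by
    conv_lhs => rw [← top_eq_ker_sup χ]
    have := r.hsup2 {kerM χ, eU} w
    rwa [iSup_pair] at this
  have : (⊤ : S) ≤ w := by
    rw [← h1, hsplit, he]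
    exact sup_le hk le_rfl
  exact top_le_iff.mp this

/-- The central collapse lemma: any nonzero element fixed by the unit is the top. -/
lemma collapse [Nontrivial A] (hS : (⊥ : S) ≠ ⊤) (hnd : r.p ⊤ ⊤ = ⊤)
    {y : S} (hEy : r.p eU y = y) (hy : y ≠ ⊥) : y = ⊤ := by
  by_contra hyT
  -- the annihilator of y
  set W : MaxOf A := sSup {c : MaxOf A | r.p c y = ⊥} with hWdef
  have hWy : r.p W y = ⊥ := by
    rw [hWdef, r.hsup2]
    exact le_bot_iff.mp (iSup₂_le fun c hc => hc.le)
  have hWle : ∀ c : MaxOf A, r.p c y = ⊥ ↔ c ≤ W := fun c =>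
    ⟨fun h => le_sSup h, fun h => le_bot_iff.mp (hWy ▸ r.monoc h y)⟩
  have hWid : IsIdealE W := by
    intro f hf g
    have h2 : qmul W ⊤ ≤ W := (hWle _).mp (by rw [r.hmul, hWy, r.pbot1])
    exact coe_le.mp h2 (mul_mem_qmul hf (mem_top' g))
  have hW1 : (1 : A) ∉ W.1 := by
    intro h1
    apply hy
    rw [← hEy]
    refine (hWle eU).mpr (coe_le.mpr ?_)
    rw [show (eU : MaxOf A).1 = Submodule.span ℂ {1} from rfl, Submodule.span_le]
    intro z hz
    rw [Set.mem_singleton_iff.mp hz]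
    exact h1
  obtain ⟨χ₀, hχW⟩ := exists_char_of_one_not_mem hWid hW1
  -- step 1 : p (ker χ₀) y = ⊤
  have hPy : r.p ⊤ y = ⊤ := r.ptop_of_ne hnd hy
  have hsplit : r.p ⊤ y = r.p (kerM χ₀) y ⊔ y := by
    conv_lhs => rw [← top_eq_ker_sup χ₀]
    have := r.hsup2 {kerM χ₀, eU} y
    rw [this, iSup_pair, hEy]
  rcases r.ideal_dichotomy hnd (kerM_isIdeal χ₀) y with hm | hm
  · rw [hsplit, hm, bot_sup_eq] at hPy
    exact hyT hPy
  -- step 2 : find a neighborhood ideal acting as ⊤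
  set fam : Set (MaxOf A) :=
    {c | ∃ U : Set (characterSpace ℂ A), IsOpen U ∧ χ₀ ∈ U ∧ c = KU U} with hfamdef
  have htopfam : (⊤ : S) ≤ ⨆ c ∈ fam, r.p c y := by
    rw [← r.hsup2]
    rw [← hm]
    exact r.monoc (ker_le_fam χ₀) y
  have hex : ∃ U : Set (characterSpace ℂ A), IsOpen U ∧ χ₀ ∈ U ∧ r.p (KU U) y ≠ ⊥ := by
    by_contra hnone
    push_neg at hnone
    have : ⨆ c ∈ fam, r.p c y ≤ ⊥ := by
      refine iSup₂_le fun c hc => ?_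
      obtain ⟨U, hUo, hUm, rfl⟩ := hc
      rw [hnone U hUo hUm]
    exact hS (le_antisymm bot_le (htopfam.trans this))
  obtain ⟨U, hUo, hχU, hne⟩ := hex
  have hKU : r.p (KU U) y = ⊤ :=
    (r.ideal_dichotomy hnd (KU_isIdeal U) y).resolve_left hne
  -- step 3 : Urysohn function supported in U
  obtain ⟨g, hg0, hg1, _⟩ := exists_continuous_zero_one_of_isClosed
    (isClosed_compl_iff.mpr hUo) (isClosed_singleton (x := χ₀))
    (by
      rw [Set.disjoint_left]
      intro t ht ht'
      rw [Set.mem_singleton_iff] at ht'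
      subst ht'
      exact ht hχU)
  obtain ⟨u, hu⟩ := exists_elem g
  have hu0 : ∀ t : characterSpace ℂ A, t ∉ U → t u = 0 := by
    intro t ht
    rw [hu t, hg0 ht]
    simp
  have huχ : χ₀ u = 1 := by
    rw [hu χ₀, hg1 rfl]
    simp
  have hker : ∀ f ∈ (KU U).1, ∀ n ∈ (lineM u).1, f * n = 0 := by
    intro f hf n hn
    obtain ⟨α, rfl⟩ := Submodule.mem_span_singleton.mp hn
    have hfu : f * u = 0 := by
      refine eq_zero_of_char fun t => ?_
      rw [map_mul]
      by_cases htU : t ∈ U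
      · rw [hf t htU, zero_mul]
      · rw [hu0 t htU, mul_zero]
    rw [mul_smul_comm, hfu, smul_zero]
  have hKl : qmul (KU U) (lineM u) = ⊥ := by
    refine le_bot_iff.mp (qmul_le fun m hm n hn => ?_)
    rw [hker m hm n hn, bot_coe]
    exact Submodule.zero_mem ⊥
  have hl : r.p (lineM u) ⊤ = ⊥ := by
    have := r.hmul (KU U) (lineM u) y
    rw [hKl, r.pbot2, hKU] at this
    exact this.symm
  have hlW : lineM u ≤ W := (hWle _).mp (le_bot_iff.mp (hl ▸ r.monox (lineM u) le_top))
  have : χ₀ u = 0 := hχW u (coe_le.mp hlW (mem_lineM_self u))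
  rw [huχ] at this
  exact one_ne_zero this

end QRep

/- ---------------- the two directions ---------------- -/

lemma backward {a b : MaxOf A}
    (hT : qmul (qmul ⊤ a) ⊤ = qmul (qmul ⊤ b) ⊤)
    {S : Type u} [CompleteLattice S] (r : QRep A S) (x : S) : r.p a x ≤ r.p b x := by
  rcases subsingleton_or_nontrivial A with hA | hA
  · haveI := maxOf_subsingleton hA
    rw [Subsingleton.elim a b]
  by_cases hS : (⊥ : S) = ⊤
  · have hall : ∀ u : S, u = ⊥ := fun u => le_antisymm (le_top.trans hS.ge) bot_le
    rw [hall (r.p a x), hall (r.p b x)]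
  rcases r.ptop_dichot ⊤ with hdeg | hnd
  · have hle : r.p a x ≤ ⊥ :=
      calc r.p a x ≤ r.p ⊤ x := r.monoc le_top x
        _ ≤ r.p ⊤ ⊤ := r.monox ⊤ le_top
        _ = ⊥ := hdeg
    exact hle.trans bot_le
  set y := r.p eU x with hy
  have hEy : r.p eU y = y := by rw [hy, ← r.hmul eU eU x, qmul_e_right]
  have hax : r.p a x = r.p a y := by rw [hy, ← r.hmul eU a x, qmul_e_left]
  have hbx : r.p b x = r.p b y := by rw [hy, ← r.hmul eU b x, qmul_e_left]
  by_cases hybot : y = ⊥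
  · rw [hax, hybot, r.pbot1]
    exact bot_le
  have hytop : y = ⊤ := r.collapse hS hnd hEy hybot
  rw [hax, hbx, hytop]
  have haT : r.p a ⊤ ≤ r.p (qmul (qmul ⊤ b) ⊤) ⊤ := by
    rw [← hT]
    exact r.monoc (le_T a) ⊤
  rcases r.ideal_dichotomy hnd (T_isIdeal b) (⊤ : S) with hTb | hTb
  · rw [hTb] at haT
    exact haT.trans bot_le
  · have hcomp : r.p (qmul (qmul ⊤ b) ⊤) ⊤ = r.p ⊤ (r.p b ⊤) := by
      rw [r.hmul (qmul ⊤ b) ⊤, r.hmul ⊤ b, hnd]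
    have h1 : r.p ⊤ (r.p b ⊤) = ⊤ := by rw [← hcomp, hTb]
    have h2 : r.p b ⊤ ≠ ⊥ := by
      intro h0
      rw [h0, r.pbot1] at h1
      exact hS h1
    have hE2 : r.p eU (r.p b ⊤) = r.p b ⊤ := by rw [← r.hmul b eU, qmul_e_right]
    rw [r.collapse hS hnd hE2 h2]
    exact le_top

lemma punit_set_cases (x : Set PUnit.{u+1}) : x = ⊥ ∨ x = ⊤ := by
  by_cases h : PUnit.unit ∈ x
  · right
    ext t
    cases t
    exact iff_of_true h trivial
  · left
    ext t
    cases t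
    exact iff_of_false h (fun hc => hc)

lemma forward_char (a b : MaxOf A)
    (h : ∀ (S : Type u) [CompleteLattice S] (p : MaxOf A → S → S),
        (∀ (c : MaxOf A) (s : Set S), p c (sSup s) = ⨆ x ∈ s, p c x) →
        (∀ (s : Set (MaxOf A)) (x : S), p (sSup s) x = ⨆ c ∈ s, p c x) →
        (∀ (c d : MaxOf A) (x : S), p (qmul c d) x = p d (p c x)) →
        (∀ x : S, p ⊤ x ≤ x → x = ⊥ ∨ x = ⊤) →
        p a = p b)
    (χ : characterSpace ℂ A) : (a ≤ kerM χ ↔ b ≤ kerM χ) := by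
  set m := kerM χ with hm
  set p : MaxOf A → Set PUnit.{u+1} → Set PUnit.{u+1} :=
    fun c x => {t | t ∈ x ∧ ¬ c ≤ m} with hp
  have hax1 : ∀ (c : MaxOf A) (s : Set (Set PUnit.{u+1})),
      p c (sSup s) = ⨆ x ∈ s, p c x := by
    intro c s
    ext t
    simp only [hp, Set.mem_setOf_eq, Set.sSup_eq_sUnion, Set.mem_sUnion, Set.iSup_eq_iUnion, Set.mem_iUnion]
    tauto
  have hax2 : ∀ (s : Set (MaxOf A)) (x : Set PUnit.{u+1}),
      p (sSup s) x = ⨆ c ∈ s, p c x := by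
    intro s x
    ext t
    simp only [hp, Set.mem_setOf_eq, Set.iSup_eq_iUnion, Set.mem_iUnion, sSup_le_iff]
    push_neg
    tauto
  have hax3 : ∀ (c d : MaxOf A) (x : Set PUnit.{u+1}),
      p (qmul c d) x = p d (p c x) := by
    intro c d x
    ext t
    simp only [hp, Set.mem_setOf_eq]
    rw [qmul_le_ker_iff χ]
    tauto
  have hax4 : ∀ x : Set PUnit.{u+1}, p ⊤ x ≤ x → x = ⊥ ∨ x = ⊤ :=
    fun x _ => punit_set_cases x
  have hpab := h (Set PUnit.{u+1}) p hax1 hax2 hax3 hax4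
  have hval := Set.ext_iff.mp (congrFun hpab Set.univ) PUnit.unit
  simp only [hp, Set.mem_setOf_eq, Set.mem_univ, true_and] at hval
  exact not_iff_not.mp hval

lemma forward (a b : MaxOf A)
    (h : ∀ (S : Type u) [CompleteLattice S] (p : MaxOf A → S → S),
        (∀ (c : MaxOf A) (s : Set S), p c (sSup s) = ⨆ x ∈ s, p c x) →
        (∀ (s : Set (MaxOf A)) (x : S), p (sSup s) x = ⨆ c ∈ s, p c x) →
        (∀ (c d : MaxOf A) (x : S), p (qmul c d) x = p d (p c x)) →
        (∀ x : S, p ⊤ x ≤ x → x = ⊥ ∨ x = ⊤) →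
        p a = p b) :
    qmul (qmul ⊤ a) ⊤ = qmul (qmul ⊤ b) ⊤ := by
  rcases subsingleton_or_nontrivial A with hA | hA
  · haveI := maxOf_subsingleton hA
    exact Subsingleton.elim _ _
  have key : ∀ χ : characterSpace ℂ A, (a ≤ kerM χ ↔ b ≤ kerM χ) := forward_char a b h
  have hab : a.1 ≤ (qmul (qmul ⊤ b) ⊤).1 := by
    intro f hf
    by_contra hfT
    obtain ⟨χ, hχ0, hχf⟩ := exists_char_not_mem (T_isIdeal b) hfT
    have hbk : b ≤ kerM χ :=
      (le_T b).trans (coe_le.mpr fun g hg => mem_kerM.mpr (hχ0 g hg))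
    have hak : a ≤ kerM χ := (key χ).mpr hbk
    exact hχf (mem_kerM.mp (coe_le.mp hak hf))
  have hba : b.1 ≤ (qmul (qmul ⊤ a) ⊤).1 := by
    intro f hf
    by_contra hfT
    obtain ⟨χ, hχ0, hχf⟩ := exists_char_not_mem (T_isIdeal a) hfT
    have hak : a ≤ kerM χ :=
      (le_T a).trans (coe_le.mpr fun g hg => mem_kerM.mpr (hχ0 g hg))
    have hbk : b ≤ kerM χ := (key χ).mp hak
    exact hχf (mem_kerM.mp (coe_le.mp hbk hf))
  exact le_antisymm (T_min (coe_le.mpr hab) (T_isIdeal b)) (T_min (coe_le.mpr hba) (T_isIdeal a))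

end MaxSpatialAux

/-- For a commutative unital C*-algebra `A` and `a b ∈ Max A`, all irreducible
representations of `Max A` (on complete lattices) identify `a` and `b` if and only if
`⊤∘a∘⊤ = ⊤∘b∘⊤`; i.e., the spatialization of `Max A` with respect to all irreducible
representations is the locale of closed two-sided ideals of `A`, with quotient map
`a ↦ ⊤∘a∘⊤`. -/
theorem maxOf_spatialization_eq_closed_ideals (a b : MaxOf A) :
    (∀ (S : Type u) [CompleteLattice S] (p : MaxOf A → S → S),
        (∀ (c : MaxOf A) (s : Set S), p c (sSup s) = ⨆ x ∈ s, p c x) →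
        (∀ (s : Set (MaxOf A)) (x : S), p (sSup s) x = ⨆ c ∈ s, p c x) →
        (∀ (c d : MaxOf A) (x : S), p (qmul c d) x = p d (p c x)) →
        (∀ x : S, p ⊤ x ≤ x → x = ⊥ ∨ x = ⊤) →
        p a = p b) ↔
      qmul (qmul ⊤ a) ⊤ = qmul (qmul ⊤ b) ⊤ := by
  constructor
  · intro h
    exact MaxSpatialAux.forward a b h
  · intro hT S _ p h1 h2 h3 h4
    let r : MaxSpatialAux.QRep A S := ⟨p, h1, h2, h3, h4⟩
    funext x
    exact le_antisymm (MaxSpatialAux.backward hT r x) (MaxSpatialAux.backward hT.symm r x)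
end

section
/- Let Q be a unital quantale whose unit e is its top element ⊤. Let L and M be frames, and let f : L → Q and g : M → Q be maps preserving arbitrary suprema (hence f(⊥) = ⊥ and g(⊥) = ⊥) and satisfying f(a ⊓ a') = f(a)∘f(a') for all a, a' ∈ L, g(b ⊓ b') = g(b)∘g(b') for all b, b' ∈ M, and g(⊤_M) = ⊤. If M is a regular frame, then f(a)∘g(b) = g(b)∘f(a) for all a ∈ L and b ∈ M. -/
/-- Let `Q` be a unital quantale whose unit is the top element, and let
`f : L → Q`, `g : M → Q` be sup-preserving maps from frames `L`, `M` turning binary meets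
into the quantale multiplication, with `g ⊤ = ⊤`. If `M` is a regular frame then the
images of `f` and `g` commute elementwise. -/
theorem images_commute_of_regular_frame
    {Q L M : Type*} [CompleteLattice Q] [Order.Frame L] [Order.Frame M]
    (mul : Q → Q → Q)
    (hassoc : ∀ a b c : Q, mul (mul a b) c = mul a (mul b c))
    (hdistl : ∀ (a : Q) (s : Set Q), mul a (sSup s) = ⨆ b ∈ s, mul a b)
    (hdistr : ∀ (s : Set Q) (b : Q), mul (sSup s) b = ⨆ a ∈ s, mul a b)
    (hel : ∀ a : Q, mul ⊤ a = a) (her : ∀ a : Q, mul a ⊤ = a)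
    (f : L → Q) (g : M → Q)
    (hf : ∀ s : Set L, f (sSup s) = ⨆ a ∈ s, f a)
    (hg : ∀ s : Set M, g (sSup s) = ⨆ b ∈ s, g b)
    (hfm : ∀ a a' : L, f (a ⊓ a') = mul (f a) (f a'))
    (hgm : ∀ b b' : M, g (b ⊓ b') = mul (g b) (g b'))
    (hgtop : g ⊤ = ⊤)
    (hreg : ∀ b : M, b = ⨆ b' ∈ {b' : M | ∃ c, b' ⊓ c = ⊥ ∧ b ⊔ c = ⊤}, b') :
    ∀ (a : L) (b : M), mul (f a) (g b) = mul (g b) (f a) := by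
  have hbotr : ∀ a : Q, mul a ⊥ = ⊥ := fun a => by simpa using hdistl a ∅
  have hbotl : ∀ a : Q, mul ⊥ a = ⊥ := fun a => by simpa using hdistr ∅ a
  have hsupl : ∀ a x y : Q, mul a (x ⊔ y) = mul a x ⊔ mul a y := by
    intro a x y
    have := hdistl a {x, y}
    simpa [sSup_pair, iSup_or, iSup_sup_eq] using this
  have hsupr : ∀ a x y : Q, mul (x ⊔ y) a = mul x a ⊔ mul y a := by
    intro a x y
    have := hdistr {x, y} a
    simpa [sSup_pair, iSup_or, iSup_sup_eq] using this
  have hmonol : ∀ (a : Q) {x y : Q}, x ≤ y → mul a x ≤ mul a y := by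
    intro a x y hxy
    have : mul a (x ⊔ y) = mul a x ⊔ mul a y := hsupl a x y
    rw [sup_eq_right.mpr hxy] at this
    rw [this]; exact le_sup_left
  have hmonor : ∀ (a : Q) {x y : Q}, x ≤ y → mul x a ≤ mul y a := by
    intro a x y hxy
    have : mul (x ⊔ y) a = mul x a ⊔ mul y a := hsupr a x y
    rw [sup_eq_right.mpr hxy] at this
    rw [this]; exact le_sup_left
  have hgbot : g ⊥ = ⊥ := by simpa using hg ∅
  intro a b
  set S : Set M := {b' : M | ∃ c, b' ⊓ c = ⊥ ∧ b ⊔ c = ⊤} with hS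
  have h1 : ∀ b' ∈ S, mul (f a) (g b') ≤ mul (g b) (f a) := by
    rintro b' ⟨c, hc1, hc2⟩
    have hcb' : mul (g c) (g b') = ⊥ := by
      rw [← hgm, inf_comm, hc1, hgbot]
    have htop : g b ⊔ g c = ⊤ := by
      have h := hg {b, c}
      rw [sSup_pair, hc2, hgtop, iSup_pair] at h
      exact h.symm
    calc mul (f a) (g b') = mul (g b ⊔ g c) (mul (f a) (g b')) := by
          rw [htop, hel]
      _ = mul (g b) (mul (f a) (g b')) ⊔ mul (g c) (mul (f a) (g b')) := hsupr _ _ _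
      _ ≤ mul (g b) (mul (f a) (g b')) ⊔ ⊥ := by
          refine sup_le_sup_left ?_ _
          have : mul (f a) (g b') ≤ mul ⊤ (g b') := hmonor _ le_top
          rw [hel] at this
          calc mul (g c) (mul (f a) (g b')) ≤ mul (g c) (g b') := hmonol _ this
            _ = ⊥ := hcb'
      _ = mul (g b) (mul (f a) (g b')) := sup_bot_eq _
      _ ≤ mul (g b) (mul (f a) ⊤) := hmonol _ (hmonol _ le_top)
      _ = mul (g b) (f a) := by rw [her]
  have h2 : ∀ b' ∈ S, mul (g b') (f a) ≤ mul (f a) (g b) := by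
    rintro b' ⟨c, hc1, hc2⟩
    have hb'c : mul (g b') (g c) = ⊥ := by
      rw [← hgm, hc1, hgbot]
    have htop : g b ⊔ g c = ⊤ := by
      have h := hg {b, c}
      rw [sSup_pair, hc2, hgtop, iSup_pair] at h
      exact h.symm
    calc mul (g b') (f a) = mul (mul (g b') (f a)) (g b ⊔ g c) := by
          rw [htop, her]
      _ = mul (mul (g b') (f a)) (g b) ⊔ mul (mul (g b') (f a)) (g c) := hsupl _ _ _
      _ ≤ mul (mul (g b') (f a)) (g b) ⊔ ⊥ := by
          refine sup_le_sup_left ?_ _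
          calc mul (mul (g b') (f a)) (g c) = mul (g b') (mul (f a) (g c)) := hassoc _ _ _
            _ ≤ mul (g b') (mul ⊤ (g c)) := hmonol _ (hmonor _ le_top)
            _ = mul (g b') (g c) := by rw [hel]
            _ = ⊥ := hb'c
      _ = mul (mul (g b') (f a)) (g b) := sup_bot_eq _
      _ = mul (g b') (mul (f a) (g b)) := hassoc _ _ _
      _ ≤ mul ⊤ (mul (f a) (g b)) := hmonor _ le_top
      _ = mul (f a) (g b) := hel _
  have hgb : g b = ⨆ b' ∈ S, g b' := by
    conv_lhs => rw [hreg b]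
    rw [← sSup_eq_iSup, hg]
  apply le_antisymm
  · conv_lhs => rw [show g b = sSup (g '' S) by rw [hgb, sSup_image]]
    rw [hdistl, iSup_image]
    exact iSup₂_le h1
  · conv_lhs => rw [show g b = sSup (g '' S) by rw [hgb, sSup_image]]
    rw [hdistr, iSup_image]
    exact iSup₂_le h2
end

section
/- Let γ₁, γ₂ : ℂ² → ℂ⁴ be the unital *-homomorphisms of C*-algebras given by γ₁(z, w) = (z, z, w, w) and γ₂(z, w) = (z, w, z, w). Let S be the smallest subset of Max ℂ⁴ that contains the image γ₁[M] and γ₂[M] of every linear subspace M of ℂ², contains the unit ℂ·(1,1,1,1), and is closed under the quantale multiplication M∘N, arbitrary joins, and the involution M*. Then S does not contain the one-dimensional subspace ℂ·(1, 0, 1, 1). (Hence the unital involutive subquantale of Max ℂ⁴ generated by the images of Max γ₁ and Max γ₂ is a proper subquantale of Max ℂ⁴, and Max does not preserve the coproduct ℂ² + ℂ² of unital C*-algebras.) -/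
abbrev C4 := Fin 4 → ℂ

/-- The *-homomorphism `γ₁(z, w) = (z, z, w, w)` from `ℂ²` to `ℂ⁴`, as a linear map. -/
noncomputable def g1 : (ℂ × ℂ) →ₗ[ℂ] C4 where
  toFun z := ![z.1, z.1, z.2, z.2]
  map_add' a b := by
    funext i
    fin_cases i <;> simp
  map_smul' c a := by
    funext i
    fin_cases i <;> simp

/-- The *-homomorphism `γ₂(z, w) = (z, w, z, w)` from `ℂ²` to `ℂ⁴`, as a linear map. -/
noncomputable def g2 : (ℂ × ℂ) →ₗ[ℂ] C4 where
  toFun z := ![z.1, z.2, z.1, z.2]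
  map_add' a b := by
    funext i
    fin_cases i <;> simp
  map_smul' c a := by
    funext i
    fin_cases i <;> simp

/-- The involution of `Max ℂ⁴` : `M* = {m* : m ∈ M}`, described via `a ∈ M* ↔ a* ∈ M`. -/
noncomputable def qstar (M : Submodule ℂ C4) : Submodule ℂ C4 where
  carrier := {a : C4 | star a ∈ M}
  add_mem' := fun ha hb => by simpa [star_add] using M.add_mem ha hb
  zero_mem' := by simpa using M.zero_mem
  smul_mem' := fun c a ha => by simpa [star_smul] using M.smul_mem (star c) ha

/-- The smallest subset of `Max ℂ⁴` containing the images under `Max γ₁` and `Max γ₂` of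
all linear subspaces of `ℂ²` and the unit `ℂ·(1,1,1,1)`, and closed under the quantale
multiplication, arbitrary joins, and the involution. -/
inductive GenS : Submodule ℂ C4 → Prop
  | img1 (M : Submodule ℂ (ℂ × ℂ)) : GenS ((M.map g1).topologicalClosure)
  | img2 (M : Submodule ℂ (ℂ × ℂ)) : GenS ((M.map g2).topologicalClosure)
  | unit : GenS (Submodule.span ℂ {(1 : C4)})
  | mul {M N : Submodule ℂ C4} : GenS M → GenS N → GenS ((M * N).topologicalClosure)
  | star {M : Submodule ℂ C4} : GenS M → GenS (qstar M)
  | join (s : Set (Submodule ℂ C4)) :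
      (∀ M ∈ s, GenS M) → GenS ((sSup s).topologicalClosure)

/-- A "pure tensor" condition: the 2×2 matrix `[[a0,a1],[a2,a3]]` has determinant 0. -/
def PureT (a : C4) : Prop := a 0 * a 3 = a 1 * a 2

/-- The set of pure elements of a submodule. -/
def pureSet (M : Submodule ℂ C4) : Set C4 := {a | a ∈ M ∧ PureT a}

/-- The invariant: `M` is spanned by its pure elements. -/
def SpannedByPure (M : Submodule ℂ C4) : Prop := M ≤ Submodule.span ℂ (pureSet M)

lemma closure_eq (M : Submodule ℂ C4) : M.topologicalClosure = M :=
  SetLike.coe_injective (IsClosed.closure_eq (Submodule.closed_of_finiteDimensional M))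

lemma pureSet_mono {M N : Submodule ℂ C4} (h : M ≤ N) : pureSet M ⊆ pureSet N :=
  fun a ha => ⟨h ha.1, ha.2⟩

open Pointwise
lemma inv_of_genS {M : Submodule ℂ C4} (h : GenS M) : SpannedByPure M := by
  induction h with
  | img1 M =>
      rw [closure_eq]
      intro x hx
      apply Submodule.subset_span
      obtain ⟨z, _, rfl⟩ := hx
      exact ⟨Submodule.mem_map_of_mem ‹_›, by simp [PureT, g1, mul_comm]⟩
  | img2 M =>
      rw [closure_eq]
      intro x hx
      apply Submodule.subset_span
      obtain ⟨z, _, rfl⟩ := hx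
      exact ⟨Submodule.mem_map_of_mem ‹_›, by simp [PureT, g2, mul_comm]⟩
  | unit =>
      intro x hx
      apply Submodule.subset_span
      refine ⟨hx, ?_⟩
      rw [Submodule.mem_span_singleton] at hx
      obtain ⟨c, rfl⟩ := hx
      simp [PureT]
  | mul hM hN ihM ihN =>
      rw [closure_eq]
      rename_i M N
      calc M * N ≤ Submodule.span ℂ (pureSet M) * Submodule.span ℂ (pureSet N) :=
            mul_le_mul' ihM ihN
        _ = Submodule.span ℂ (pureSet M * pureSet N) := Submodule.span_mul_span ℂ _ _
        _ ≤ Submodule.span ℂ (pureSet (M * N)) := by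
            apply Submodule.span_mono
            rintro _ ⟨p, hp, q, hq, rfl⟩
            refine ⟨Submodule.mul_mem_mul hp.1 hq.1, ?_⟩
            have hp2 := hp.2; have hq2 := hq.2
            simp only [PureT, Pi.mul_apply] at *
            calc p 0 * q 0 * (p 3 * q 3) = (p 0 * p 3) * (q 0 * q 3) := by ring
              _ = (p 1 * p 2) * (q 1 * q 2) := by rw [hp2, hq2]
              _ = p 1 * q 1 * (p 2 * q 2) := by ring
  | star hM ihM =>
      rename_i M
      intro x hx
      have hx' : star x ∈ Submodule.span ℂ (pureSet M) := ihM hx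
      have key : ∀ y ∈ Submodule.span ℂ (pureSet M),
          star y ∈ Submodule.span ℂ (pureSet (qstar M)) := by
        intro y hy
        induction hy using Submodule.span_induction with
        | mem a ha =>
            apply Submodule.subset_span
            refine ⟨?_, ?_⟩
            · show star (star a) ∈ M
              simpa using ha.1
            · have h2 := ha.2
              simp only [PureT, Pi.star_apply] at *
              rw [← star_mul', ← star_mul', h2]
        | zero => simpa using Submodule.zero_mem _
        | add a b _ _ iha ihb =>
            rw [star_add]; exact Submodule.add_mem _ iha ihb
        | smul c a _ iha =>
            rw [star_smul]; exact Submodule.smul_mem _ _ iha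
      simpa using key (star x) hx'
  | join s hs ihs =>
      rw [closure_eq]
      apply sSup_le
      intro M hM
      calc M ≤ Submodule.span ℂ (pureSet M) := ihs M hM
        _ ≤ Submodule.span ℂ (pureSet (sSup s)) :=
            Submodule.span_mono (pureSet_mono (le_sSup hM))

/-- the unital involutive subquantale of `Max ℂ⁴` generated by the images of
`Max γ₁` and `Max γ₂` does not contain the one-dimensional subspace `ℂ·(1, 0, 1, 1)`.
(Hence it is a proper subquantale of `Max ℂ⁴`, and `Max` does not preserve the coproduct
`ℂ² + ℂ²` of unital C*-algebras.) -/
theorem generated_subquantale_proper :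
    ¬ GenS (Submodule.span ℂ {(![1, 0, 1, 1] : C4)}) := by
  intro h
  have hinv := inv_of_genS h
  set v : C4 := ![1, 0, 1, 1] with hv
  have hvmem : v ∈ Submodule.span ℂ {v} := Submodule.mem_span_singleton_self v
  have hsub : pureSet (Submodule.span ℂ {v}) ⊆ {0} := by
    rintro a ⟨ha, hpa⟩
    rw [Submodule.mem_span_singleton] at ha
    obtain ⟨c, rfl⟩ := ha
    simp only [PureT, Pi.smul_apply, hv] at hpa
    simp only [Matrix.cons_val_zero, Matrix.cons_val_one, Matrix.head_cons,
      Matrix.cons_val_fin_one, smul_eq_mul] at hpa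
    have hc : c = 0 := by
      have : c * 1 * (c * 1) = c * 0 * (c * 1) := by
        convert hpa using 2 <;> norm_num [Matrix.cons_val, show (![1, 0, 1, 1] : C4) 3 = 1 from rfl,
          show (![1, 0, 1, 1] : C4) 2 = 1 from rfl]
      have : c * c = 0 := by linear_combination this
      exact pow_eq_zero_iff (n := 2) (by norm_num) |>.mp (by linear_combination this)
    simp [hc]
  have : v ∈ Submodule.span ℂ ({0} : Set C4) :=
    Submodule.span_mono hsub (hinv hvmem)
  rw [Submodule.span_zero_singleton] at this
  have h0 : v 0 = 0 := by rw [Submodule.mem_bot] at this; rw [this]; rfl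
  simp [hv] at h0
end

section
/- The functor Max is faithful: if A and B are unital C*-algebras and f, g : A → B are unital *-homomorphisms such that for every closed linear subspace M of A the closure of f[M] equals the closure of g[M] (i.e., Max f = Max g), then f = g. -/
/-- the functor `Max` is faithful: if two unital *-homomorphisms `f, g` of
unital C*-algebras induce the same map on closed linear subspaces (`Max f = Max g`, where
`Max f` sends a closed subspace `M` to the closure of `f[M]`), then `f = g`. -/
theorem max_faithful
    {A B : Type*}
    [NormedRing A] [StarRing A] [CStarRing A] [CompleteSpace A]
    [NormedAlgebra ℂ A] [StarModule ℂ A]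
    [NormedRing B] [StarRing B] [CStarRing B] [CompleteSpace B]
    [NormedAlgebra ℂ B] [StarModule ℂ B]
    (f g : A →⋆ₐ[ℂ] B)
    (h : ∀ M : Submodule ℂ A, IsClosed (M : Set A) →
      (M.map f.toAlgHom.toLinearMap).topologicalClosure =
        (M.map g.toAlgHom.toLinearMap).topologicalClosure) :
    f = g := by
  rcases subsingleton_or_nontrivial B with hB | hB
  · ext a; exact Subsingleton.elim _ _
  have key : ∀ x : A, Submodule.span ℂ {f x} = Submodule.span ℂ {g x} := by
    intro x
    have hM : IsClosed ((Submodule.span ℂ {x} : Submodule ℂ A) : Set A) :=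
      (Submodule.span ℂ {x}).closed_of_finiteDimensional
    have hh := h (Submodule.span ℂ {x}) hM
    rw [Submodule.map_span, Submodule.map_span, Set.image_singleton,
      Set.image_singleton] at hh
    simp only [AlgHom.toLinearMap_apply, StarAlgHom.coe_toAlgHom] at hh
    rwa [IsClosed.submodule_topologicalClosure_eq
        (Submodule.span ℂ {f x}).closed_of_finiteDimensional,
      IsClosed.submodule_topologicalClosure_eq
        (Submodule.span ℂ {g x}).closed_of_finiteDimensional] at hh
  have mem : ∀ x : A, ∃ c : ℂ, c • f x = g x := by
    intro x
    have : g x ∈ Submodule.span ℂ ({f x} : Set B) := by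
      rw [key x]; exact Submodule.mem_span_singleton_self _
    exact Submodule.mem_span_singleton.mp this
  ext a
  by_cases hs : ∃ μ : ℂ, f a = μ • (1 : B)
  · obtain ⟨μ, hμ⟩ := hs
    have hf0 : f (a - μ • 1) = 0 := by
      simp [map_sub, map_smul, map_one, hμ]
    have hg0 : g (a - μ • 1) = 0 := by
      obtain ⟨c, hc⟩ := mem (a - μ • 1)
      rw [hf0, smul_zero] at hc
      exact hc.symm
    have : g a = μ • 1 := by
      have := hg0
      rw [map_sub, map_smul, map_one, sub_eq_zero] at this
      exact this
    rw [this, hμ]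
  · push_neg at hs
    obtain ⟨c, hc⟩ := mem a
    obtain ⟨d, hd⟩ := mem (a + 1)
    rw [map_add, map_one, map_add, map_one, ← hc] at hd
    -- hd : d • (f a + 1) = c • f a + 1
    have hcd : (c - d) • f a = (d - 1) • (1 : B) := by
      rw [smul_add] at hd
      rw [sub_smul, sub_smul, one_smul]
      linear_combination (norm := module) -hd
    have hceqd : c = d := by
      by_contra hne
      have hsub : (c - d) ≠ 0 := sub_ne_zero.mpr hne
      have : f a = ((d - 1) / (c - d)) • (1 : B) := by
        rw [div_eq_mul_inv, mul_comm, mul_smul, ← hcd, smul_smul,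
          inv_mul_cancel₀ hsub, one_smul]
      exact hs _ this
    rw [hceqd, sub_self, zero_smul] at hcd
    have hd1 : d = 1 := by
      by_contra hne
      have : (d - 1) ≠ 0 := sub_ne_zero.mpr hne
      rcases smul_eq_zero.mp hcd.symm with h1 | h1
      · exact this h1
      · exact one_ne_zero h1
    rw [← hc, hceqd, hd1, one_smul]
end
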